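/- Let q, t > 1 be real numbers and k ≥ 1 an integer. For all partitions λ, ν of k, the auxiliary variables Markov kernel satisfies detailed balance with respect to π_{q,t}: π_{q,t}(λ)·M(λ,ν) = π_{q,t}(ν)·M(ν,λ). Consequently π_{q,t} is a stationary distribution: Σ_{λ⊢k} π_{q,t}(λ)·M(λ,ν) = π_{q,t}(ν) for every partition ν of k. -/

import Mathlib

open Finset

/-- `z_λ = ∏_i i^{a_i(λ)} a_i(λ)!` for a multiset of parts. -/
def zWeight (m : Multiset ℕ) : ℕ :=
  ∏ i ∈ m.toFinset, i ^ m.count i * (m.count i).factorial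

/-- `(x,y)_k = ∏_{i=0}^{k-1} (1 - x y^i)`. -/
noncomputable def poch (x y : ℝ) (k : ℕ) : ℝ :=
  ∏ i ∈ Finset.range k, (1 - x * y ^ i)

/-- The measure `π_{q,t}` on partitions of `k`. -/
noncomputable def piQT (q t : ℝ) (k : ℕ) (l : Nat.Partition k) : ℝ :=
  (poch q q k / poch t q k) * ((zWeight l.parts : ℝ))⁻¹ *
    (l.parts.map (fun p => (1 - t ^ p) / (1 - q ^ p))).prod

/-- `π_{∞,t}` evaluated on a multiset of parts. -/
noncomputable def piInf (t : ℝ) (m : Multiset ℕ) : ℝ :=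
  (t / (t - 1)) * ((zWeight m : ℝ))⁻¹ * (m.map (fun p => 1 - t⁻¹ ^ p)).prod

/-- The weight `w_λ(κ)` of choosing the sub-multiset `κ` of kept parts. -/
noncomputable def wKeep (q : ℝ) (k : ℕ) (l κ : Multiset ℕ) : ℝ :=
  (q ^ k - 1)⁻¹ * ∏ i ∈ Finset.Icc 1 k,
    (Nat.choose (l.count i) (κ.count i) : ℝ) * (q ^ i - 1) ^ (l.count i - κ.count i)

/-- The auxiliary variables Markov kernel on partitions of `k`. -/
noncomputable def auxM (q t : ℝ) (k : ℕ) (l ν : Nat.Partition k) : ℝ :=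
  ∑ κ ∈ l.parts.powerset.toFinset.filter (fun κ => κ ≤ ν.parts ∧ κ ≠ l.parts),
    wKeep q k l.parts κ * piInf t (ν.parts - κ)


lemma prod_count_superset {M : Type*} [CommMonoid M] (m : Multiset ℕ) (f : ℕ → M)
    {s : Finset ℕ} (hs : m.toFinset ⊆ s) :
    (m.map f).prod = ∏ i ∈ s, f i ^ m.count i := by
  rw [Finset.prod_multiset_map_count]
  refine Finset.prod_subset hs (fun i _ hi => ?_)
  rw [Multiset.count_eq_zero_of_notMem (by simpa using hi), pow_zero]

lemma zWeight_superset (m : Multiset ℕ) {s : Finset ℕ} (hs : m.toFinset ⊆ s) :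
    zWeight m = ∏ i ∈ s, i ^ m.count i * (m.count i).factorial := by
  refine Finset.prod_subset hs (fun i _ hi => ?_)
  rw [Multiset.count_eq_zero_of_notMem (by simpa using hi)]
  simp

lemma zWeight_mul (m κ : Multiset ℕ) (h : κ ≤ m) {s : Finset ℕ} (hs : m.toFinset ⊆ s) :
    zWeight m = (∏ i ∈ s, (m.count i).choose (κ.count i)) * zWeight κ * zWeight (m - κ) := by
  have hκs : κ.toFinset ⊆ s :=
    (Multiset.toFinset_subset.mpr (Multiset.subset_of_le h)).trans hs
  have hds : (m - κ).toFinset ⊆ s :=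
    (Multiset.toFinset_subset.mpr (Multiset.subset_of_le tsub_le_self)).trans hs
  rw [zWeight_superset m hs, zWeight_superset κ hκs, zWeight_superset _ hds,
    ← Finset.prod_mul_distrib, ← Finset.prod_mul_distrib]
  refine Finset.prod_congr rfl (fun i _ => ?_)
  have hc : κ.count i ≤ m.count i := Multiset.le_iff_count.mp h i
  rw [Multiset.count_sub]
  rw [← Nat.choose_mul_factorial_mul_factorial hc,
    ← Nat.add_sub_cancel' hc, pow_add, Nat.add_sub_cancel_left]
  ring

lemma toFinset_subset_Icc {k : ℕ} (m : Multiset ℕ) (hpos : ∀ p ∈ m, 0 < p) (hsum : m.sum ≤ k) :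
    m.toFinset ⊆ Finset.Icc 1 k := by
  intro i hi
  rw [Multiset.mem_toFinset] at hi
  exact Finset.mem_Icc.mpr ⟨hpos i hi,
    le_trans (Multiset.single_le_sum (fun x _ => Nat.zero_le x) i hi) hsum⟩

lemma eq_of_le_of_sum_eq {κ m : Multiset ℕ} (h : κ ≤ m) (hpos : ∀ p ∈ m, 0 < p)
    (hsum : m.sum ≤ κ.sum) : κ = m := by
  have hadd : m - κ + κ = m := tsub_add_cancel_of_le h
  have hd : (m - κ).sum = 0 := by
    have := congrArg Multiset.sum hadd
    rw [Multiset.sum_add] at this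
    omega
  have : m - κ = 0 := by
    rw [Multiset.eq_zero_iff_forall_notMem]
    intro x hx
    have hx' : x ∈ m := Multiset.mem_of_le tsub_le_self hx
    have := hpos x hx'
    have := Multiset.sum_eq_zero_iff.mp hd x hx
    omega
  rw [this, zero_add] at hadd
  exact hadd

lemma msum (m : Multiset ℕ) : m.sum = ∑ i ∈ m.toFinset, m.count i * i := by
  conv_lhs => rw [← Multiset.map_id m]
  rw [Finset.sum_multiset_map_count]
  simp [smul_eq_mul]

lemma zWeight_pos (m : Multiset ℕ) (hpos : ∀ p ∈ m, 0 < p) : 0 < zWeight m := by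
  refine Finset.prod_pos (fun i hi => ?_)
  have : 0 < i := hpos i (Multiset.mem_toFinset.mp hi)
  positivity

lemma prod_map_pow (x : ℝ) (m : Multiset ℕ) :
    (m.map (fun p => x ^ p)).prod = x ^ m.sum := by
  induction m using Multiset.induction_on with
  | empty => simp
  | cons a s ih => simp [pow_add, ih, mul_comm]

noncomputable def Gk (q t : ℝ) (k : ℕ) (κ : Multiset ℕ) : ℝ :=
  (poch q q k / poch t q k) * ((t - 1) / t) * (q ^ k - 1)⁻¹ * ((zWeight κ : ℝ))⁻¹ *
    (κ.map (fun p => (1 - t ^ p) / (1 - q ^ p))).prod * t ^ (k - κ.sum)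

lemma key_lemma (q t : ℝ) (hq : 1 < q) (ht : 1 < t) (k : ℕ)
    (l : Nat.Partition k) (κ : Multiset ℕ) (hκ : κ ≤ l.parts) :
    piQT q t k l * wKeep q k l.parts κ = Gk q t k κ * piInf t (l.parts - κ) := by
  set m := l.parts with hm
  set d := m - κ with hdd
  have hpos : ∀ p ∈ m, 0 < p := fun p hp => l.parts_pos hp
  have hsum : m.sum = k := l.parts_sum
  have hms : m.toFinset ⊆ Finset.Icc 1 k := toFinset_subset_Icc m hpos hsum.le
  have hdm : d ≤ m := tsub_le_self
  have hdpos : ∀ p ∈ d, 0 < p := fun p hp => hpos p (Multiset.mem_of_le hdm hp)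
  have hκpos : ∀ p ∈ κ, 0 < p := fun p hp => hpos p (Multiset.mem_of_le hκ hp)
  have hadd : κ + d = m := by
    rw [hdd, add_comm]; exact tsub_add_cancel_of_le hκ
  have hdsum : d.sum = k - κ.sum := by
    have := congrArg Multiset.sum hadd
    rw [Multiset.sum_add, hsum] at this
    omega
  -- z decomposition
  set B : ℕ := ∏ i ∈ Finset.Icc 1 k, (m.count i).choose (κ.count i) with hB
  have hzN : zWeight m = B * (zWeight κ * zWeight d) := by
    rw [hB, hdd, zWeight_mul m κ hκ hms]; ring
  have hz : (zWeight m : ℝ) = (B : ℝ) * (zWeight κ * zWeight d) := by exact_mod_cast hzN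
  -- product split
  have hP : (m.map (fun p => (1 - t ^ p) / (1 - q ^ p))).prod
      = (κ.map (fun p => (1 - t ^ p) / (1 - q ^ p))).prod
        * (d.map (fun p => (1 - t ^ p) / (1 - q ^ p))).prod := by
    rw [← hadd, Multiset.map_add, Multiset.prod_add]
  -- wKeep product split
  have hW : (∏ i ∈ Finset.Icc 1 k,
      (Nat.choose (m.count i) (κ.count i) : ℝ) * (q ^ i - 1) ^ (m.count i - κ.count i))
      = (B : ℝ) * (d.map (fun p => q ^ p - 1)).prod := by
    rw [Finset.prod_mul_distrib, hB]
    push_cast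
    congr 1
    rw [prod_count_superset d _ ((Multiset.toFinset_subset.mpr (Multiset.subset_of_le hdm)).trans hms)]
    refine Finset.prod_congr rfl (fun i _ => ?_)
    rw [hdd, Multiset.count_sub]
  -- pointwise identity on d
  have hpt : (d.map (fun p => (1 - t ^ p) / (1 - q ^ p))).prod
      * (d.map (fun p => q ^ p - 1)).prod
      = t ^ (k - κ.sum) * (d.map (fun p => 1 - t⁻¹ ^ p)).prod := by
    rw [← Multiset.prod_map_mul, ← hdsum, ← prod_map_pow t d, ← Multiset.prod_map_mul]
    refine congrArg Multiset.prod (Multiset.map_congr rfl (fun p hp => ?_))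
    have hp1 : 0 < p := hdpos p hp
    have hq1 : (1 : ℝ) < q ^ p := one_lt_pow₀ hq hp1.ne'
    have ht0 : (0 : ℝ) < t := lt_trans one_pos ht
    have : (1 : ℝ) - q ^ p ≠ 0 := by linarith
    have htp : t ^ p * t⁻¹ ^ p = 1 := by rw [← mul_pow, mul_inv_cancel₀ ht0.ne', one_pow]
    field_simp
    linear_combination (1 - q ^ p) * htp
  have hBpos : 0 < B := by
    refine Finset.prod_pos (fun i _ => Nat.choose_pos (Multiset.le_iff_count.mp hκ i))
  have hB0 : (B : ℝ) ≠ 0 := Nat.cast_ne_zero.mpr hBpos.ne'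
  have hzκ : (zWeight κ : ℝ) ≠ 0 := Nat.cast_ne_zero.mpr (zWeight_pos κ hκpos).ne'
  have hzd : (zWeight d : ℝ) ≠ 0 := Nat.cast_ne_zero.mpr (zWeight_pos d hdpos).ne'
  have ht0 : t ≠ 0 := by positivity
  have ht1 : t - 1 ≠ 0 := by intro h; linarith
  have hBc : (B : ℝ)⁻¹ * (B : ℝ) = 1 := inv_mul_cancel₀ hB0
  have hdiv : (t - 1) / t * (t / (t - 1)) = 1 := by field_simp
  have hzz : ((zWeight κ * zWeight d : ℕ) : ℝ)⁻¹ = ((zWeight κ : ℝ))⁻¹ * ((zWeight d : ℝ))⁻¹ := by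
    push_cast; rw [mul_inv]
  rw [piQT, wKeep, Gk, piInf, ← hm, hz, hP, hW]
  rw [mul_inv, mul_inv]
  linear_combination
    ((poch q q k / poch t q k) * ((zWeight κ : ℝ))⁻¹ * ((zWeight d : ℝ))⁻¹
        * (κ.map (fun p => (1 - t ^ p) / (1 - q ^ p))).prod * (q ^ k - 1)⁻¹
        * (d.map (fun p => (1 - t ^ p) / (1 - q ^ p))).prod
        * (d.map (fun p => q ^ p - 1)).prod) * hBc
    + ((poch q q k / poch t q k) * ((zWeight κ : ℝ))⁻¹ * ((zWeight d : ℝ))⁻¹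
        * (κ.map (fun p => (1 - t ^ p) / (1 - q ^ p))).prod * (q ^ k - 1)⁻¹) * hpt
    - ((poch q q k / poch t q k) * ((zWeight κ : ℝ))⁻¹ * ((zWeight d : ℝ))⁻¹
        * (κ.map (fun p => (1 - t ^ p) / (1 - q ^ p))).prod * (q ^ k - 1)⁻¹
        * t ^ (k - κ.sum) * (d.map (fun p => 1 - t⁻¹ ^ p)).prod) * hdiv

lemma sum_powerset_prod (F : ℕ → ℕ → ℝ) (m : Multiset ℕ) :
    ∀ s : Finset ℕ, m.toFinset ⊆ s →
      ∑ κ ∈ m.powerset.toFinset, ∏ i ∈ s, F i (κ.count i)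
        = ∏ i ∈ s, ∑ b ∈ Finset.range (m.count i + 1), F i b := by
  induction m using Multiset.strongInductionOn with
  | _ m ih =>
    intro s hs
    rcases eq_or_ne m 0 with rfl | hne
    · simp
    obtain ⟨i₀, hi₀⟩ := Multiset.exists_mem_of_ne_zero hne
    set c := m.count i₀ with hcdef
    set m₀ := m.filter (fun x => ¬ x = i₀) with hm₀def
    have hc : 0 < c := Multiset.count_pos.mpr hi₀
    have hm₀c : m₀.count i₀ = 0 := by
      rw [hm₀def, Multiset.count_filter]; simp
    have hm₀lt : m₀ < m := by
      refine lt_of_le_of_ne (Multiset.filter_le _ m) (fun h => ?_)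
      rw [h] at hm₀c; omega
    have hi₀s : i₀ ∈ s := hs (Multiset.mem_toFinset.mpr hi₀)
    have hm₀s : m₀.toFinset ⊆ s.erase i₀ := by
      intro i hi
      rw [Multiset.mem_toFinset, hm₀def, Multiset.mem_filter] at hi
      exact Finset.mem_erase.mpr ⟨hi.2, hs (Multiset.mem_toFinset.mpr hi.1)⟩
    have hcount : ∀ i ∈ s.erase i₀, m.count i = m₀.count i := by
      intro i hi
      rw [hm₀def, Multiset.count_filter, if_pos (Finset.mem_erase.mp hi).1]
    have step : ∑ κ ∈ m.powerset.toFinset, ∏ i ∈ s, F i (κ.count i)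
        = ∑ p ∈ (Finset.range (c + 1)) ×ˢ m₀.powerset.toFinset,
            F i₀ p.1 * ∏ i ∈ s.erase i₀, F i (p.2.count i) := by
      refine Finset.sum_nbij'
        (i := fun κ => (κ.count i₀, κ.filter (fun x => ¬ x = i₀)))
        (j := fun p => Multiset.replicate p.1 i₀ + p.2) ?_ ?_ ?_ ?_ ?_
      · intro κ hκ
        rw [Multiset.mem_toFinset, Multiset.mem_powerset] at hκ
        refine Finset.mem_product.mpr ⟨?_, ?_⟩
        · exact Finset.mem_range.mpr (Nat.lt_succ_of_le (Multiset.le_iff_count.mp hκ i₀))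
        · rw [Multiset.mem_toFinset, Multiset.mem_powerset]
          exact Multiset.filter_le_filter _ hκ
      · intro p hp
        obtain ⟨hp1, hp2⟩ := Finset.mem_product.mp hp
        rw [Finset.mem_range] at hp1
        rw [Multiset.mem_toFinset, Multiset.mem_powerset] at hp2 ⊢
        rw [Multiset.le_iff_count]
        intro i
        have h1 : p.2.count i ≤ m₀.count i := Multiset.le_iff_count.mp hp2 i
        rw [Multiset.count_add, Multiset.count_replicate]
        by_cases hii : i₀ = i
        · subst hii
          rw [if_pos rfl]
          omega
        · rw [if_neg hii]
          have h2 : m₀.count i = m.count i := by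
            rw [hm₀def, Multiset.count_filter, if_pos (fun h => hii h.symm)]
          omega
      · intro κ hκ
        simp only
        conv_rhs => rw [← Multiset.filter_add_not (fun x => x = i₀) κ]
        rw [Multiset.filter_eq']
      · intro p hp
        obtain ⟨hp1, hp2⟩ := Finset.mem_product.mp hp
        rw [Multiset.mem_toFinset, Multiset.mem_powerset] at hp2
        have hp2c : p.2.count i₀ = 0 :=
          Nat.le_zero.mp (le_trans (Multiset.le_iff_count.mp hp2 i₀) (le_of_eq hm₀c))
        have hni : i₀ ∉ p.2 := by rwa [← Multiset.count_eq_zero]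
        refine Prod.ext ?_ ?_
        · simp [Multiset.count_add, Multiset.count_replicate, hp2c]
        · simp only
          rw [Multiset.filter_add]
          rw [Multiset.filter_eq_nil.mpr (by intro a ha; simp [Multiset.eq_of_mem_replicate ha]),
            Multiset.filter_eq_self.mpr (fun a ha => by rintro rfl; exact hni ha), zero_add]
      · intro κ hκ
        rw [Multiset.mem_toFinset, Multiset.mem_powerset] at hκ
        rw [← Finset.mul_prod_erase s _ hi₀s]
        simp only
        congr 1
        refine Finset.prod_congr rfl (fun i hi => ?_)
        rw [Multiset.count_filter, if_pos (Finset.mem_erase.mp hi).1]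
    rw [step, Finset.sum_product, ← Finset.mul_prod_erase s _ hi₀s]
    have : ∀ b ∈ Finset.range (c + 1),
        ∑ κ₀ ∈ m₀.powerset.toFinset, F i₀ b * ∏ i ∈ s.erase i₀, F i (κ₀.count i)
          = F i₀ b * ∏ i ∈ s.erase i₀, ∑ x ∈ Finset.range (m₀.count i + 1), F i x := by
      intro b _
      rw [← Finset.mul_sum, ih m₀ hm₀lt (s.erase i₀) hm₀s]
    rw [Finset.sum_congr rfl this, ← Finset.sum_mul]
    congr 1
    refine Finset.prod_congr rfl (fun i hi => ?_)
    rw [hcount i hi]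

lemma binom_sum (x : ℝ) (a : ℕ) :
    ∑ b ∈ Finset.range (a + 1), (a.choose b : ℝ) * x ^ (a - b) = (x + 1) ^ a := by
  rw [add_pow, ← Finset.sum_range_reflect]
  refine Finset.sum_congr rfl (fun b hb => ?_)
  have hb' : b ≤ a := Nat.lt_succ_iff.mp (Finset.mem_range.mp hb)
  rw [Nat.add_sub_cancel, Nat.choose_symm hb', one_pow, Nat.sub_sub_self hb']
  ring

lemma sum_Icc_count_mul (k : ℕ) (m : Multiset ℕ) (hpos : ∀ p ∈ m, 0 < p) (hsum : m.sum = k) :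
    ∑ i ∈ Finset.Icc 1 k, m.count i * i = k := by
  conv_rhs => rw [← hsum, msum m]
  symm
  refine Finset.sum_subset (toFinset_subset_Icc m hpos hsum.le) (fun i _ hi => ?_)
  rw [Multiset.count_eq_zero_of_notMem (by simpa using hi), zero_mul]

lemma sum_wKeep (q : ℝ) (hq : 1 < q) (k : ℕ) (hk : 1 ≤ k) (ν : Nat.Partition k) :
    ∑ κ ∈ ν.parts.powerset.toFinset.filter (fun κ => κ ≠ ν.parts), wKeep q k ν.parts κ = 1 := by
  set m := ν.parts with hm
  have hpos : ∀ p ∈ m, 0 < p := fun p hp => ν.parts_pos hp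
  have hsum : m.sum = k := ν.parts_sum
  have hms : m.toFinset ⊆ Finset.Icc 1 k := toFinset_subset_Icc m hpos hsum.le
  have hq0 : (0:ℝ) < q := lt_trans one_pos hq
  have hqk : (1:ℝ) < q ^ k := one_lt_pow₀ hq (by omega)
  have htot : ∑ κ ∈ m.powerset.toFinset, wKeep q k m κ = (q ^ k - 1)⁻¹ * q ^ k := by
    unfold wKeep
    rw [← Finset.mul_sum]
    congr 1
    rw [sum_powerset_prod (fun i b => (Nat.choose (m.count i) b : ℝ) * (q ^ i - 1) ^ (m.count i - b))
      m (Finset.Icc 1 k) hms]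
    have : ∀ i ∈ Finset.Icc 1 k,
        ∑ b ∈ Finset.range (m.count i + 1),
          (Nat.choose (m.count i) b : ℝ) * (q ^ i - 1) ^ (m.count i - b)
        = (q ^ i) ^ (m.count i) := by
      intro i _
      rw [binom_sum, sub_add_cancel]
    rw [Finset.prod_congr rfl this]
    calc ∏ i ∈ Finset.Icc 1 k, (q ^ i) ^ m.count i
        = ∏ i ∈ Finset.Icc 1 k, q ^ (m.count i * i) := by
          refine Finset.prod_congr rfl (fun i _ => ?_)
          rw [← pow_mul, mul_comm]
      _ = q ^ (∑ i ∈ Finset.Icc 1 k, m.count i * i) := Finset.prod_pow_eq_pow_sum _ _ _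
      _ = q ^ k := by rw [sum_Icc_count_mul k m hpos hsum]
  have hmem : m ∈ m.powerset.toFinset := by
    rw [Multiset.mem_toFinset, Multiset.mem_powerset]
  have hwm : wKeep q k m m = (q ^ k - 1)⁻¹ := by
    unfold wKeep
    have h1 : ∀ i ∈ Finset.Icc 1 k,
        (Nat.choose (m.count i) (m.count i) : ℝ) * (q ^ i - 1) ^ (m.count i - m.count i)
          = 1 := by
      intro i _; simp
    rw [Finset.prod_congr rfl h1, Finset.prod_const_one, mul_one]
  have hsplit := Finset.sum_erase_add m.powerset.toFinset (wKeep q k m) hmem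
  rw [Finset.filter_ne']
  have hne : q ^ k - 1 ≠ 0 := by intro h; nlinarith
  have h2 : ∑ x ∈ m.powerset.toFinset.erase m, wKeep q k m x
      = (q ^ k - 1)⁻¹ * q ^ k - (q ^ k - 1)⁻¹ := by
    rw [← htot, ← hsplit, hwm]; ring
  rw [h2]
  field_simp

def subPartition {n : ℕ} (κ : Multiset ℕ) (l : Nat.Partition n) (h : κ ≤ l.parts) :
    Nat.Partition (n - κ.sum) where
  parts := l.parts - κ
  parts_pos := fun hi => l.parts_pos (Multiset.mem_of_le tsub_le_self hi)
  parts_sum := by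
    have h2 : (l.parts - κ) + κ = l.parts := tsub_add_cancel_of_le h
    have h3 := congrArg Multiset.sum h2
    rw [Multiset.sum_add, l.parts_sum] at h3
    omega

def addPartition {n : ℕ} (κ : Multiset ℕ) (hpos : ∀ p ∈ κ, 0 < p) (hle : κ.sum ≤ n)
    (μ : Nat.Partition (n - κ.sum)) : Nat.Partition n where
  parts := μ.parts + κ
  parts_pos := fun hi => by
    rcases Multiset.mem_add.mp hi with h | h
    · exact μ.parts_pos h
    · exact hpos _ h
  parts_sum := by rw [Multiset.sum_add, μ.parts_sum]; omega

lemma sum_completion {n : ℕ} (κ : Multiset ℕ) (hpos : ∀ p ∈ κ, 0 < p) (hle : κ.sum ≤ n)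
    (f : Multiset ℕ → ℝ) :
    ∑ l ∈ Finset.univ.filter (fun l : Nat.Partition n => κ ≤ l.parts), f (l.parts - κ)
      = ∑ μ : Nat.Partition (n - κ.sum), f μ.parts := by
  refine Finset.sum_bij'
    (fun l hl => subPartition κ l (Finset.mem_filter.mp hl).2)
    (fun μ _ => addPartition κ hpos hle μ)
    (fun l hl => Finset.mem_univ _)
    (fun μ _ => Finset.mem_filter.mpr ⟨Finset.mem_univ _, le_add_self⟩)
    (fun l hl => ?_) (fun μ _ => ?_) (fun l hl => rfl)
  · exact Nat.Partition.ext (tsub_add_cancel_of_le (Finset.mem_filter.mp hl).2)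
  · exact Nat.Partition.ext (add_tsub_cancel_right _ _)

noncomputable def Afun (u : ℝ) (n : ℕ) : ℝ :=
  ∑ l : Nat.Partition n, ((zWeight l.parts : ℝ))⁻¹ * ((l.parts.map (fun p => 1 - u ^ p)).prod)

lemma parts_zero (l : Nat.Partition 0) : l.parts = 0 := by
  rw [Multiset.eq_zero_iff_forall_notMem]
  intro x hx
  have h1 := l.parts_pos hx
  have h2 := Multiset.sum_eq_zero_iff.mp l.parts_sum x hx
  omega

lemma Afun_zero (u : ℝ) : Afun u 0 = 1 := by
  rw [Afun]
  have h : ∀ l : Nat.Partition 0,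
      ((zWeight l.parts : ℝ))⁻¹ * ((l.parts.map (fun p => 1 - u ^ p)).prod) = 1 := by
    intro l
    rw [parts_zero l]
    simp [zWeight]
  rw [Finset.sum_congr rfl (fun l _ => h l), Finset.sum_const, Finset.card_univ]
  simp [Fintype.card_unique]

lemma zWeight_singleton (m : ℕ) : zWeight {m} = m := by
  simp [zWeight]

lemma zW_erase {k : ℕ} (μ : Multiset ℕ) (hpos : ∀ p ∈ μ, 0 < p) (hsum : μ.sum = k)
    (m : ℕ) (hm : m ∈ μ) :
    zWeight μ = μ.count m * m * zWeight (μ - {m}) := by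
  have hκ : ({m} : Multiset ℕ) ≤ μ := Multiset.singleton_le.mpr hm
  have hms : μ.toFinset ⊆ Finset.Icc 1 k := toFinset_subset_Icc μ hpos hsum.le
  have hmIcc : m ∈ Finset.Icc 1 k := hms (Multiset.mem_toFinset.mpr hm)
  rw [zWeight_mul μ {m} hκ hms, zWeight_singleton]
  congr 1
  rw [Finset.prod_eq_single_of_mem m hmIcc (fun i _ hne => by
    rw [Multiset.count_singleton, if_neg hne, Nat.choose_zero_right])]
  rw [Multiset.count_singleton, if_pos rfl, Nat.choose_one_right]

lemma Afun_rec (u : ℝ) (n : ℕ) (hn : 1 ≤ n) :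
    (n : ℝ) * Afun u n = ∑ m ∈ Finset.Icc 1 n, (1 - u ^ m) * Afun u (n - m) := by
  rw [Afun, Finset.mul_sum]
  have step1 : ∀ l : Nat.Partition n,
      (n : ℝ) * (((zWeight l.parts : ℝ))⁻¹ * ((l.parts.map (fun p => 1 - u ^ p)).prod))
      = ∑ m ∈ Finset.Icc 1 n, ((l.parts.count m * m : ℕ) : ℝ)
          * (((zWeight l.parts : ℝ))⁻¹ * ((l.parts.map (fun p => 1 - u ^ p)).prod)) := by
    intro l
    rw [← Finset.sum_mul]
    congr 1
    rw [← Nat.cast_sum]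
    rw [sum_Icc_count_mul n l.parts (fun p hp => l.parts_pos hp) l.parts_sum]
  rw [Finset.sum_congr rfl (fun l _ => step1 l), Finset.sum_comm]
  refine Finset.sum_congr rfl (fun m hm => ?_)
  obtain ⟨hm1, hm2⟩ := Finset.mem_Icc.mp hm
  have hfil : ∑ l : Nat.Partition n, ((l.parts.count m * m : ℕ) : ℝ)
        * (((zWeight l.parts : ℝ))⁻¹ * ((l.parts.map (fun p => 1 - u ^ p)).prod))
      = ∑ l ∈ Finset.univ.filter (fun l : Nat.Partition n => ({m} : Multiset ℕ) ≤ l.parts),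
          ((l.parts.count m * m : ℕ) : ℝ)
          * (((zWeight l.parts : ℝ))⁻¹ * ((l.parts.map (fun p => 1 - u ^ p)).prod)) := by
    symm
    refine Finset.sum_filter_of_ne (fun l _ hne => ?_)
    rw [Multiset.singleton_le, ← Multiset.count_pos]
    by_contra hc
    push_neg at hc
    have : l.parts.count m = 0 := by omega
    rw [this] at hne
    simp at hne
  rw [hfil]
  have hterm : ∀ l ∈ Finset.univ.filter (fun l : Nat.Partition n => ({m} : Multiset ℕ) ≤ l.parts),
      ((l.parts.count m * m : ℕ) : ℝ)
        * (((zWeight l.parts : ℝ))⁻¹ * ((l.parts.map (fun p => 1 - u ^ p)).prod))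
      = (1 - u ^ m) * (((zWeight (l.parts - {m}) : ℝ))⁻¹
          * (((l.parts - {m}).map (fun p => 1 - u ^ p)).prod)) := by
    intro l hl
    have hml : m ∈ l.parts := Multiset.singleton_le.mp (Finset.mem_filter.mp hl).2
    have hz := zW_erase l.parts (fun p hp => l.parts_pos hp) l.parts_sum m hml
    have hc0 : 0 < l.parts.count m * m := by
      have := Multiset.count_pos.mpr hml
      have := l.parts_pos hml
      positivity
    have hzr : ((zWeight l.parts : ℝ)) = ((l.parts.count m * m : ℕ) : ℝ)
        * ((zWeight (l.parts - {m}) : ℝ)) := by exact_mod_cast congrArg (Nat.cast (R := ℝ)) hz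
    have hprod : ((l.parts.map (fun p => 1 - u ^ p)).prod)
        = (1 - u ^ m) * (((l.parts - {m}).map (fun p => 1 - u ^ p)).prod) := by
      conv_lhs => rw [← tsub_add_cancel_of_le (Multiset.singleton_le.mpr hml)]
      rw [Multiset.map_add, Multiset.prod_add]
      simp [mul_comm]
    have hcne : ((l.parts.count m * m : ℕ) : ℝ) ≠ 0 := Nat.cast_ne_zero.mpr hc0.ne'
    rw [hzr, hprod, mul_inv]
    have hinv : ((l.parts.count m * m : ℕ) : ℝ) * (((l.parts.count m * m : ℕ) : ℝ))⁻¹ = 1 :=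
      mul_inv_cancel₀ hcne
    linear_combination ((zWeight (l.parts - {m}) : ℝ))⁻¹ * (1 - u ^ m)
      * (((l.parts - {m}).map (fun p => 1 - u ^ p)).prod) * hinv
  rw [Finset.sum_congr rfl hterm, ← Finset.mul_sum]
  congr 1
  have := sum_completion (n := n) {m} (by intro p hp; rw [Multiset.mem_singleton.mp hp]; omega)
    (by rw [Multiset.sum_singleton]; omega)
    (fun ν => ((zWeight ν : ℝ))⁻¹ * ((ν.map (fun p => 1 - u ^ p)).prod))
  rw [Multiset.sum_singleton] at this
  rw [this, Afun]

lemma geom_aux (u : ℝ) (N : ℕ) :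
    ∑ m ∈ Finset.Icc 1 N, (1 - u ^ m) * (1 - u) = (N : ℝ) * (1 - u) - (u - u ^ (N + 1)) := by
  induction N with
  | zero => simp
  | succ N ih =>
    rw [Finset.sum_Icc_succ_top (by omega), ih]
    push_cast
    ring

lemma Afun_eq (u : ℝ) : ∀ n : ℕ, 1 ≤ n → Afun u n = 1 - u := by
  intro n
  induction n using Nat.strong_induction_on with
  | _ n ih =>
    intro hn
    obtain ⟨N, rfl⟩ : ∃ N, n = N + 1 := ⟨n - 1, by omega⟩
    have hrec := Afun_rec u (N + 1) (by omega)
    rw [Finset.sum_Icc_succ_top (by omega)] at hrec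
    have h0 : Afun u ((N + 1) - (N + 1)) = 1 := by rw [Nat.sub_self, Afun_zero]
    have hIH : ∀ m ∈ Finset.Icc 1 N, (1 - u ^ m) * Afun u (N + 1 - m)
        = (1 - u ^ m) * (1 - u) := by
      intro m hm
      obtain ⟨h1, h2⟩ := Finset.mem_Icc.mp hm
      rw [ih (N + 1 - m) (by omega) (by omega)]
    rw [Finset.sum_congr rfl hIH, h0, mul_one, geom_aux] at hrec
    have hN : ((N : ℝ) + 1) ≠ 0 := by positivity
    have : ((N : ℝ) + 1) * Afun u (N + 1) = ((N : ℝ) + 1) * (1 - u) := by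
      push_cast at hrec
      rw [hrec]; ring
    have := mul_left_cancel₀ hN this
    exact this

lemma sum_piInf (t : ℝ) (ht : 1 < t) (n : ℕ) (hn : 1 ≤ n) :
    ∑ μ : Nat.Partition n, piInf t μ.parts = 1 := by
  have ht0 : t ≠ 0 := by positivity
  have ht1 : t - 1 ≠ 0 := by intro h; linarith
  unfold piInf
  have : ∀ μ : Nat.Partition n, (t / (t - 1)) * ((zWeight μ.parts : ℝ))⁻¹
      * ((μ.parts.map (fun p => 1 - t⁻¹ ^ p)).prod)
      = (t / (t - 1)) * (((zWeight μ.parts : ℝ))⁻¹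
        * ((μ.parts.map (fun p => 1 - t⁻¹ ^ p)).prod)) := fun μ => by ring
  rw [Finset.sum_congr rfl (fun μ _ => this μ), ← Finset.mul_sum]
  have hA : ∑ μ : Nat.Partition n, (((zWeight μ.parts : ℝ))⁻¹
      * ((μ.parts.map (fun p => 1 - t⁻¹ ^ p)).prod)) = Afun t⁻¹ n := rfl
  rw [hA, Afun_eq t⁻¹ n hn]
  field_simp

lemma ne_parts {k : ℕ} (a b : Nat.Partition k) (κ : Multiset ℕ)
    (h1 : κ ≤ a.parts) (h3 : κ ≠ a.parts) : κ ≠ b.parts := fun he =>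
  h3 (eq_of_le_of_sum_eq h1 (fun p hp => a.parts_pos hp)
    (by rw [a.parts_sum, he, b.parts_sum]))

lemma rowsum (q t : ℝ) (hq : 1 < q) (ht : 1 < t) (k : ℕ) (hk : 1 ≤ k)
    (ν : Nat.Partition k) : ∑ l : Nat.Partition k, auxM q t k ν l = 1 := by
  have hstep : ∀ l : Nat.Partition k, auxM q t k ν l
      = ∑ κ ∈ ν.parts.powerset.toFinset.filter (fun κ => κ ≠ ν.parts),
          if κ ≤ l.parts then wKeep q k ν.parts κ * piInf t (l.parts - κ) else 0 := by
    intro l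
    rw [auxM, Finset.sum_filter, Finset.sum_filter]
    refine Finset.sum_congr rfl (fun κ _ => ?_)
    by_cases h1 : κ ≤ l.parts <;> by_cases h2 : κ ≠ ν.parts <;> simp [h1, h2]
  rw [Finset.sum_congr rfl (fun l _ => hstep l), Finset.sum_comm]
  rw [← sum_wKeep q hq k hk ν]
  refine Finset.sum_congr rfl (fun κ hκ => ?_)
  obtain ⟨hκm, hκne⟩ := Finset.mem_filter.mp hκ
  rw [Multiset.mem_toFinset, Multiset.mem_powerset] at hκm
  have hκpos : ∀ p ∈ κ, 0 < p := fun p hp => ν.parts_pos (Multiset.mem_of_le hκm hp)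
  have hκsum : κ.sum ≤ k := by
    have h2 : (ν.parts - κ) + κ = ν.parts := tsub_add_cancel_of_le hκm
    have h3 := congrArg Multiset.sum h2
    rw [Multiset.sum_add, ν.parts_sum] at h3
    omega
  have hlt : κ.sum < k := by
    rcases lt_or_eq_of_le hκsum with h | h
    · exact h
    · exact absurd (eq_of_le_of_sum_eq hκm (fun p hp => ν.parts_pos hp)
        (by rw [ν.parts_sum, h])) hκne
  have hite : ∑ l : Nat.Partition k,
      (if κ ≤ l.parts then wKeep q k ν.parts κ * piInf t (l.parts - κ) else 0)
      = ∑ l ∈ Finset.univ.filter (fun l : Nat.Partition k => κ ≤ l.parts),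
          wKeep q k ν.parts κ * piInf t (l.parts - κ) := by
    rw [Finset.sum_filter]
  rw [hite, ← Finset.mul_sum,
    sum_completion (n := k) κ hκpos hκsum (fun m => piInf t m),
    sum_piInf t ht (k - κ.sum) (by omega), mul_one]

/-- Detailed balance and stationarity of `π_{q,t}` for the auxiliary variables chain. -/
theorem auxM_detailed_balance_and_stationary
    (q t : ℝ) (hq : 1 < q) (ht : 1 < t) (k : ℕ) (hk : 1 ≤ k) :
    (∀ l ν : Nat.Partition k,
      piQT q t k l * auxM q t k l ν = piQT q t k ν * auxM q t k ν l) ∧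
    (∀ ν : Nat.Partition k,
      ∑ l : Nat.Partition k, piQT q t k l * auxM q t k l ν = piQT q t k ν) := by
  have db : ∀ l ν : Nat.Partition k,
      piQT q t k l * auxM q t k l ν = piQT q t k ν * auxM q t k ν l := by
    intro l ν
    have hset : l.parts.powerset.toFinset.filter (fun κ => κ ≤ ν.parts ∧ κ ≠ l.parts)
        = ν.parts.powerset.toFinset.filter (fun κ => κ ≤ l.parts ∧ κ ≠ ν.parts) := by
      ext κ
      simp only [Finset.mem_filter, Multiset.mem_toFinset, Multiset.mem_powerset]
      constructor
      · rintro ⟨h1, h2, h3⟩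
        exact ⟨h2, h1, ne_parts l ν κ h1 h3⟩
      · rintro ⟨h1, h2, h3⟩
        exact ⟨h2, h1, ne_parts ν l κ h1 h3⟩
    rw [auxM, auxM, Finset.mul_sum, Finset.mul_sum]
    have hL : ∀ κ ∈ l.parts.powerset.toFinset.filter (fun κ => κ ≤ ν.parts ∧ κ ≠ l.parts),
        piQT q t k l * (wKeep q k l.parts κ * piInf t (ν.parts - κ))
        = Gk q t k κ * piInf t (l.parts - κ) * piInf t (ν.parts - κ) := by
      intro κ hκ
      obtain ⟨hm, _, _⟩ := Finset.mem_filter.mp hκ |>.imp id (fun h => h)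
      rw [Multiset.mem_toFinset, Multiset.mem_powerset] at hm
      rw [← mul_assoc, key_lemma q t hq ht k l κ hm]
    have hR : ∀ κ ∈ ν.parts.powerset.toFinset.filter (fun κ => κ ≤ l.parts ∧ κ ≠ ν.parts),
        piQT q t k ν * (wKeep q k ν.parts κ * piInf t (l.parts - κ))
        = Gk q t k κ * piInf t (ν.parts - κ) * piInf t (l.parts - κ) := by
      intro κ hκ
      have hm := (Finset.mem_filter.mp hκ).1
      rw [Multiset.mem_toFinset, Multiset.mem_powerset] at hm
      rw [← mul_assoc, key_lemma q t hq ht k ν κ hm]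
    rw [Finset.sum_congr rfl hL, Finset.sum_congr rfl hR, hset]
    exact Finset.sum_congr rfl (fun κ _ => by ring)
  refine ⟨db, fun ν => ?_⟩
  have : ∀ l : Nat.Partition k, piQT q t k l * auxM q t k l ν
      = piQT q t k ν * auxM q t k ν l := fun l => db l ν
  rw [Finset.sum_congr rfl (fun l _ => this l), ← Finset.mul_sum,
    rowsum q t hq ht k hk ν, mul_one]
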